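/- Forney's threshold existence: Let D, d, N be positive integers, f a received word consisting of N blocks of length n over alphabet [q], c = (c_1,...,c_N) a codeword of a concatenated code whose outer code has minimum distance D and inner code has minimum distance d, and let c'_i be a closest inner codeword to block f_i. Define w(i) = min(Δ(f_i, c'_i)/(d/2), 1). If Δ(f,c) < Dd/2, then there exists θ ∈ [0,1] such that 2·|{i : w(i) ≤ θ, c'_i ≠ c_i}| + |{i : w(i) > θ}| < D. -/
import Mathlib


open Finset

/-- Forney's threshold existence for GMD decoding of concatenated codes: if the received
word is within distance `Dd/2` of a concatenated codeword, then some threshold `θ ∈ [0,1]`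
satisfies `2·#{errors below θ} + #{coordinates above θ} < D`. -/
theorem forney_threshold_exists {N n q D d : ℕ}
    (hN : 0 < N) (hD : 0 < D) (hd : 0 < d)
    (Cin : Set (Fin n → Fin q))
    (hdist : ∀ u ∈ Cin, ∀ v ∈ Cin, u ≠ v → d ≤ hammingDist u v)
    (f c c' : Fin N → Fin n → Fin q)
    (hc : ∀ i, c i ∈ Cin) (hc' : ∀ i, c' i ∈ Cin)
    (hML : ∀ i, ∀ v ∈ Cin, hammingDist (f i) (c' i) ≤ hammingDist (f i) v)
    (w : Fin N → ℚ)
    (hw : ∀ i, w i = min ((hammingDist (f i) (c' i) : ℚ) / ((d : ℚ) / 2)) 1)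
    (herr : (∑ i, (hammingDist (f i) (c i) : ℚ)) < (D : ℚ) * (d : ℚ) / 2) :
    ∃ θ : ℚ, 0 ≤ θ ∧ θ ≤ 1 ∧
      2 * ((univ.filter fun i => w i ≤ θ ∧ c' i ≠ c i).card : ℚ) +
        ((univ.filter fun i => θ < w i).card : ℚ) < (D : ℚ) := by
  have hdQ : (0:ℚ) < d := by exact_mod_cast hd
  set θf : ℕ → ℚ := fun j => (2*j+1)/(2*d) with hθf
  set G : ℚ → ℚ := fun θ =>
      2 * ((univ.filter fun i => w i ≤ θ ∧ c' i ≠ c i).card : ℚ) +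
        ((univ.filter fun i => θ < w i).card : ℚ) with hG
  have hGsum : ∀ θ : ℚ, G θ = ∑ i : Fin N,
      ((if w i ≤ θ ∧ c' i ≠ c i then (2:ℚ) else 0) + (if θ < w i then (1:ℚ) else 0)) := by
    intro θ
    rw [hG]
    simp only
    rw [← Finset.sum_boole, ← Finset.sum_boole, Finset.mul_sum, ← Finset.sum_add_distrib]
    refine Finset.sum_congr rfl fun i _ => ?_
    by_cases h1 : (w i ≤ θ ∧ c' i ≠ c i) <;> simp [h1]
  -- per-coordinate bound
  have key : ∀ i : Fin N,
      (∑ j ∈ range d, ((if w i ≤ θf j ∧ c' i ≠ c i then (2:ℚ) else 0)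
        + (if θf j < w i then (1:ℚ) else 0)))
      ≤ 2 * (hammingDist (f i) (c i) : ℚ) := by
    intro i
    set Δ := hammingDist (f i) (c' i) with hΔ
    set A := hammingDist (f i) (c i) with hA
    have hAΔ : Δ ≤ A := hML i (c i) (hc i)
    set k := min (2*Δ) d with hk
    have hiff : ∀ j ∈ range d, (θf j < w i ↔ j < k) := by
      intro j hj
      simp only [mem_range] at hj
      have hA' : ((2*(j:ℚ)+1)/(2*(d:ℚ)) < (Δ:ℚ)/((d:ℚ)/2)) ↔ j < 2*Δ := by
        rw [div_lt_div_iff₀ (by positivity) (by positivity)]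
        constructor
        · intro h
          by_contra hc2
          push_neg at hc2
          have h2 : ((2*Δ : ℕ):ℚ) ≤ (j:ℚ) := by exact_mod_cast hc2
          push_cast at h2
          nlinarith
        · intro h
          have h2 : ((j:ℚ)) + 1 ≤ ((2*Δ : ℕ):ℚ) := by exact_mod_cast h
          push_cast at h2
          nlinarith
      have hB : ((2*(j:ℚ)+1)/(2*(d:ℚ)) < 1) := by
        rw [div_lt_one (by positivity)]
        have h3 : (2*j+1 : ℕ) < 2*d := by omega
        have h4 : ((2*j+1 : ℕ):ℚ) < ((2*d : ℕ):ℚ) := by exact_mod_cast h3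
        push_cast at h4
        linarith
      rw [hw, hθf, lt_min_iff]
      constructor
      · rintro ⟨h1, _⟩
        exact lt_min (hA'.mp h1) hj
      · intro h
        exact ⟨hA'.mpr (lt_of_lt_of_le h (by omega)), hB⟩
    rw [Finset.sum_add_distrib]
    have hs2 : (∑ j ∈ range d, if θf j < w i then (1:ℚ) else 0) = k := by
      rw [Finset.sum_congr rfl (fun j hj => by rw [if_congr (hiff j hj) rfl rfl])]
      rw [Finset.sum_boole]
      have : (range d).filter (fun j => j < k) = range k := by
        ext a; simp only [mem_filter, mem_range]; omega
      rw [this, Finset.card_range]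
    rw [hs2]
    by_cases herr' : c' i ≠ c i
    · have hAd : d ≤ A + Δ := by
        have h1 : d ≤ hammingDist (c i) (c' i) :=
          hdist (c i) (hc i) (c' i) (hc' i) (Ne.symm herr')
        calc d ≤ hammingDist (c i) (c' i) := h1
        _ ≤ hammingDist (c i) (f i) + hammingDist (f i) (c' i) := hammingDist_triangle _ _ _
        _ = A + Δ := by rw [hammingDist_comm]
      have hs1 : (∑ j ∈ range d, if w i ≤ θf j ∧ c' i ≠ c i then (2:ℚ) else 0)
          = 2 * ((d - k : ℕ) : ℚ) := by
        have hcond : ∀ j ∈ range d, ((w i ≤ θf j ∧ c' i ≠ c i) ↔ k ≤ j) := by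
          intro j hj
          rw [and_iff_left herr', ← not_lt, hiff j hj, not_lt]
        rw [Finset.sum_congr rfl (fun j hj => by rw [if_congr (hcond j hj) rfl rfl])]
        rw [← Finset.sum_filter, Finset.sum_const, nsmul_eq_mul]
        have hfe : (range d).filter (fun j => k ≤ j) = Finset.Ico k d := by
          ext a; simp only [mem_filter, mem_range, Finset.mem_Ico]; omega
        rw [hfe, Nat.card_Ico, mul_comm]
      rw [hs1]
      have hnat : 2 * (d - k) + k ≤ 2 * A := by omega
      exact_mod_cast hnat
    · have hs1 : (∑ j ∈ range d, if w i ≤ θf j ∧ c' i ≠ c i then (2:ℚ) else 0) = 0 := by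
        refine Finset.sum_eq_zero fun j _ => ?_
        simp [herr']
      rw [hs1, zero_add]
      have hk2 : k ≤ 2 * A := by omega
      exact_mod_cast hk2
  have main : (∑ j ∈ range d, G (θf j)) < ∑ j ∈ range d, (D:ℚ) := by
    rw [Finset.sum_const, Finset.card_range, nsmul_eq_mul]
    calc (∑ j ∈ range d, G (θf j))
        = ∑ j ∈ range d, ∑ i : Fin N, ((if w i ≤ θf j ∧ c' i ≠ c i then (2:ℚ) else 0)
            + (if θf j < w i then (1:ℚ) else 0)) :=
          Finset.sum_congr rfl fun j _ => hGsum (θf j)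
      _ = ∑ i : Fin N, ∑ j ∈ range d, ((if w i ≤ θf j ∧ c' i ≠ c i then (2:ℚ) else 0)
            + (if θf j < w i then (1:ℚ) else 0)) := Finset.sum_comm
      _ ≤ ∑ i : Fin N, 2 * (hammingDist (f i) (c i) : ℚ) :=
          Finset.sum_le_sum fun i _ => key i
      _ = 2 * ∑ i, (hammingDist (f i) (c i) : ℚ) := by rw [Finset.mul_sum]
      _ < 2 * ((D : ℚ) * d / 2) := by linarith
      _ = (d:ℚ) * D := by ring
  obtain ⟨j, hj, hGj⟩ := Finset.exists_lt_of_sum_lt main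
  refine ⟨θf j, by positivity, ?_, hGj⟩
  rw [hθf]
  simp only
  rw [div_le_one (by positivity)]
  simp only [mem_range] at hj
  have h3 : (2*j+1 : ℕ) ≤ 2*d := by omega
  have h4 : ((2*j+1 : ℕ):ℚ) ≤ ((2*d : ℕ):ℚ) := by exact_mod_cast h3
  push_cast at h4
  linarith
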